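/- Let ψ ∈ (0,1) and let a, â be in the probability simplex of ℝ^{m+1}. If c ∈ [0,1) satisfies c = ψ‖(1−c)·a − â‖₁ and a ≠ â, then ‖a − â‖₁ ≤ 2(1−ψ)/(1+ψ) implies c ≤ 2ψ/(1+ψ) < 1. -/

import Mathlib

theorem cost_proportion_away_from_one (m : ℕ) (ψ : ℝ) (hψ : ψ ∈ Set.Ioo (0:ℝ) 1)
    (a ahat : Fin (m+1) → ℝ)
    (ha0 : ∀ i, 0 ≤ a i) (ha1 : ∑ i, a i = 1)
    (hb0 : ∀ i, 0 ≤ ahat i) (hb1 : ∑ i, ahat i = 1)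
    (c : ℝ) (hc : c ∈ Set.Ico (0:ℝ) 1)
    (hfix : c = ψ * ∑ i, |(1 - c) * a i - ahat i|)
    (hne : a ≠ ahat)
    (hvol : ∑ i, |a i - ahat i| ≤ 2 * (1 - ψ) / (1 + ψ)) :
    c ≤ 2 * ψ / (1 + ψ) ∧ 2 * ψ / (1 + ψ) < 1 := by
  obtain ⟨hψ0, hψ1⟩ := hψ
  obtain ⟨hc0, hc1⟩ := hc
  have h1ψ : (0:ℝ) < 1 + ψ := by linarith
  have key : ∀ i, |(1 - c) * a i - ahat i| ≤ |a i - ahat i| + c * a i := by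
    intro i
    have := abs_sub (a i - ahat i) (c * a i)
    have habs : |c * a i| = c * a i := abs_of_nonneg (mul_nonneg hc0 (ha0 i))
    calc |(1 - c) * a i - ahat i| = |(a i - ahat i) - c * a i| := by ring_nf
      _ ≤ |a i - ahat i| + |c * a i| := abs_sub _ _
      _ = |a i - ahat i| + c * a i := by rw [habs]
  have hsum : ∑ i, |(1 - c) * a i - ahat i| ≤ (∑ i, |a i - ahat i|) + c := by
    calc ∑ i, |(1 - c) * a i - ahat i| ≤ ∑ i, (|a i - ahat i| + c * a i) :=
          Finset.sum_le_sum fun i _ => key i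
      _ = (∑ i, |a i - ahat i|) + c * ∑ i, a i := by
          rw [Finset.sum_add_distrib, Finset.mul_sum]
      _ = (∑ i, |a i - ahat i|) + c := by rw [ha1]; ring
  have hcle : c * (1 - ψ) ≤ ψ * ∑ i, |a i - ahat i| := by
    have := hfix
    nlinarith [mul_le_mul_of_nonneg_left hsum hψ0.le]
  constructor
  · have : c * (1 - ψ) ≤ ψ * (2 * (1 - ψ) / (1 + ψ)) :=
      le_trans hcle (mul_le_mul_of_nonneg_left hvol hψ0.le)
    have h1ψ' : (0:ℝ) < 1 - ψ := by linarith
    have heq : ψ * (2 * (1 - ψ) / (1 + ψ)) * (1 + ψ) = 2 * ψ * (1 - ψ) := by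
      field_simp
    rw [le_div_iff₀ h1ψ]
    nlinarith [mul_le_mul_of_nonneg_right this h1ψ.le]
  · rw [div_lt_one h1ψ]; linarith
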